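/- arXiv:2012.05764 — 4 statements merged into one kernel-verified Lean document; each statement's English description precedes it below -/
import Mathlib

section
/- Let S be a compact region with finite measure μ(S) partitioned into measurable sets S_1,…,S_K with areas μ_1,…,μ_K, and let λ_1,…,λ_K > 0 with λ_M = max_k λ_k, λ_m = min_k λ_k. Fix δ > 1 and let N be a Poisson process on S with constant intensity λ* = δλ_M − λ_m; let |N_k| be the number of points of N in S_k. Then the estimator M̂ = exp{−μ(S)λ_m} ∏_{k=1}^K ((δλ_M − λ_k)/(δλ_M − λ_m))^{|N_k|} satisfies E[M̂] = exp{−∑_{k=1}^K λ_k μ_k}. -/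
open MeasureTheory ProbabilityTheory Real
open scoped NNReal ENNReal

lemma aux_integral_prod_indep
    {Ω : Type*} [MeasurableSpace Ω] (P : Measure Ω) [IsProbabilityMeasure P]
    {ι : Type*} {g : ι → Ω → ℝ}
    (hg : iIndepFun g P)
    (hmeas : ∀ i, Measurable (g i)) (hpos : ∀ i ω, 0 ≤ g i ω)
    (s : Finset ι) :
    ∫ ω, ∏ i ∈ s, g i ω ∂P = ∏ i ∈ s, ∫ ω, g i ω ∂P := by
  classical
  induction s using Finset.induction_on with
  | empty => simp
  | @insert i s hi ih =>
    have hfun : (∏ j ∈ s, g j) = fun ω => ∏ j ∈ s, g j ω :=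
      funext fun ω => Finset.prod_apply _ _ _
    have hindep : IndepFun (g i) (∏ j ∈ s, g j) P :=
      (hg.indepFun_finsetProd_of_notMem hmeas hi).symm
    have hmeas' : Measurable (∏ j ∈ s, g j) := by
      rw [hfun]; exact Finset.measurable_prod s fun j _ => hmeas j
    have key := hindep.integral_mul_eq_mul_integral
      (hmeas i).aestronglyMeasurable hmeas'.aestronglyMeasurable
    rw [Finset.prod_insert hi, ← ih]
    calc ∫ ω, ∏ j ∈ insert i s, g j ω ∂P
        = ∫ ω, (g i * ∏ j ∈ s, g j) ω ∂P := by
          apply integral_congr_ae; filter_upwards with ω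
          simp [Finset.prod_insert hi, hfun]
      _ = (∫ ω, g i ω ∂P) * ∫ ω, ∏ j ∈ s, g j ω ∂P := by
          rw [key]; congr 1; simp_rw [hfun]

lemma aux_poisson_pgf (r : ℝ≥0) (c : ℝ) (hc0 : 0 ≤ c) (hc1 : c ≤ 1) :
    ∫ n, c ^ n ∂(poissonMeasure r) = Real.exp (r * (c - 1)) := by
  have hint : Integrable (fun n : ℕ => c ^ n) (poissonMeasure r) := by
    apply Integrable.mono' (integrable_const 1)
    · exact (measurable_from_top (f := fun n : ℕ => c ^ n)).aestronglyMeasurable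
    · filter_upwards with n
      rw [Real.norm_eq_abs, abs_of_nonneg (pow_nonneg hc0 n)]
      exact pow_le_one₀ hc0 hc1
  rw [integral_poissonMeasure' hint]
  have hterm : ∀ n : ℕ, (Real.exp (-r) * r ^ n / n.factorial) • c ^ n
      = Real.exp (-r) * ((r * c) ^ n / n.factorial) := by
    intro n
    rw [smul_eq_mul, mul_pow]
    ring
  have hsum : HasSum (fun n : ℕ => (r * c) ^ n / n.factorial)
      (Real.exp (r * c)) := by
    rw [Real.exp_eq_exp_ℝ]
    exact NormedSpace.expSeries_div_hasSum_exp ((r : ℝ) * c)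
  have := (hsum.mul_left (Real.exp (-r))).tsum_eq
  calc ∑' n : ℕ, (Real.exp (-r) * r ^ n / n.factorial) • c ^ n
      = ∑' n : ℕ, Real.exp (-r) * ((r * c) ^ n / n.factorial) := by
        exact tsum_congr hterm
    _ = Real.exp (-r) * Real.exp (r * c) := this
    _ = Real.exp (r * (c - 1)) := by
        rw [← Real.exp_add]; ring_nf

/-- Unbiasedness of the Poisson estimator: if the counts `|N_k|` in the regions of a
partition of `S` (induced by a homogeneous Poisson process of rate `λ* = δλ_M - λ_m`)
are independent Poisson random variables with means `μ_k λ*`, then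
`M̂ = exp(-μ(S)λ_m) ∏_k ((δλ_M - λ_k)/(δλ_M - λ_m))^{|N_k|}` has expectation
`exp(-∑_k λ_k μ_k)`. -/
theorem poisson_estimator_unbiased
    {Ω : Type*} [MeasurableSpace Ω] (P : Measure Ω) [IsProbabilityMeasure P]
    (K : ℕ) (hK : 0 < K)
    (μ : Fin K → ℝ) (hμ : ∀ k, 0 ≤ μ k) (μS : ℝ) (hμS : μS = ∑ k, μ k)
    (lam : Fin K → ℝ) (hlam : ∀ k, 0 < lam k)
    (lamM lamm : ℝ)
    (hM : IsGreatest (Set.range lam) lamM) (hm : IsLeast (Set.range lam) lamm)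
    (δ : ℝ) (hδ : 1 < δ)
    (N : Fin K → Ω → ℕ) (hNmeas : ∀ k, Measurable (N k))
    (hNdist : ∀ k, Measure.map (N k) P
      = poissonMeasure ((μ k * (δ * lamM - lamm)).toNNReal))
    (hNindep : iIndepFun N P) :
    ∫ ω, Real.exp (-(μS * lamm)) *
        ∏ k, ((δ * lamM - lam k) / (δ * lamM - lamm)) ^ (N k ω) ∂P
      = Real.exp (-∑ k, lam k * μ k) := by
  -- basic inequalities
  have hlamM_pos : 0 < lamM := by
    obtain ⟨k, hk⟩ := hM.1
    exact hk ▸ hlam k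
  have hle_M : ∀ k, lam k ≤ lamM := fun k => hM.2 ⟨k, rfl⟩
  have hm_le : ∀ k, lamm ≤ lam k := fun k => hm.2 ⟨k, rfl⟩
  have hlamm_le_M : lamm ≤ lamM := by
    obtain ⟨k, hk⟩ := hm.1
    exact hk ▸ hle_M k
  have hstar_pos : 0 < δ * lamM - lamm := by nlinarith
  set c : Fin K → ℝ := fun k => (δ * lamM - lam k) / (δ * lamM - lamm) with hc
  have hc0 : ∀ k, 0 ≤ c k := fun k =>
    div_nonneg (by nlinarith [hle_M k]) hstar_pos.le
  have hc1 : ∀ k, c k ≤ 1 := fun k =>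
    (div_le_one hstar_pos).mpr (by nlinarith [hm_le k])
  -- each factor's expectation
  have hsingle : ∀ k, ∫ ω, c k ^ N k ω ∂P = Real.exp (μ k * (lamm - lam k)) := by
    intro k
    have hmap : ∫ ω, c k ^ N k ω ∂P
        = ∫ n, c k ^ n ∂(Measure.map (N k) P) := by
      rw [integral_map (hNmeas k).aemeasurable
        (measurable_from_top (f := fun n : ℕ => c k ^ n)).aestronglyMeasurable]
    rw [hmap, hNdist k, aux_poisson_pgf _ _ (hc0 k) (hc1 k)]
    congr 1
    have hr : ((μ k * (δ * lamM - lamm)).toNNReal : ℝ) = μ k * (δ * lamM - lamm) :=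
      Real.coe_toNNReal _ (mul_nonneg (hμ k) hstar_pos.le)
    rw [hr, hc]
    field_simp
    ring
  -- independence of the factors
  have hgind : iIndepFun (fun k ω => c k ^ N k ω) P :=
    hNindep.comp (fun k n => c k ^ n) (fun k => measurable_from_top)
  have hgmeas : ∀ k, Measurable (fun ω => c k ^ N k ω) :=
    fun k => (measurable_from_top (f := fun n : ℕ => c k ^ n)).comp (hNmeas k)
  have hprod : ∫ ω, ∏ k, c k ^ N k ω ∂P = ∏ k, ∫ ω, c k ^ N k ω ∂P :=
    aux_integral_prod_indep P hgind hgmeas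
      (fun k ω => pow_nonneg (hc0 k) _) Finset.univ
  rw [integral_const_mul, hprod]
  have : ∏ k, ∫ ω, c k ^ N k ω ∂P
      = Real.exp (∑ k, μ k * (lamm - lam k)) := by
    rw [Real.exp_sum]
    exact Finset.prod_congr rfl fun k _ => hsingle k
  rw [this, ← Real.exp_add, hμS]
  congr 1
  have h1 : -(∑ k, μ k * lamm) + ∑ k, μ k * (lamm - lam k) = ∑ k, -(lam k * μ k) := by
    rw [← Finset.sum_neg_distrib, ← Finset.sum_add_distrib]
    exact Finset.sum_congr rfl fun k _ => by ring
  rw [Finset.sum_mul, h1, Finset.sum_neg_distrib]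
end

section
/- Under the setup of the Poisson estimator, if (|N_1|,…,|N_K|) are independent with |N_k| ~ Poisson(μ_k λ*) where λ* = δλ_M − λ_m, then the variance of M̂_1 = ∏_{k=1}^K ((δλ_M − λ_k)/(δλ_M − λ_m))^{|N_k|} equals exp{−∑_{k=1}^K μ_k(δλ_M − λ_m)[1 − ((δλ_M − λ_k)/(δλ_M − λ_m))^2]} − exp{−2∑_{k=1}^K μ_k(λ_k − λ_m)}. -/
open scoped NNReal ENNReal
open MeasureTheory ProbabilityTheory Real

lemma poisson_pow_integral (r : ℝ≥0) {a : ℝ} (ha : 0 ≤ a) (ha1 : a ≤ 1) :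
    ∫ n, a ^ n ∂(poissonMeasure r) = Real.exp (-(r : ℝ) * (1 - a)) := by
  have hint : Integrable (fun n : ℕ => a ^ n) (poissonMeasure r) := by
    refine (integrable_const (1 : ℝ)).mono'
      (Measurable.of_discrete).aestronglyMeasurable (ae_of_all _ fun n => ?_)
    rw [norm_pow, Real.norm_of_nonneg ha]
    exact pow_le_one₀ ha ha1
  rw [integral_poissonMeasure' hint]
  have h1 : ∀ n : ℕ, Real.exp (-(r : ℝ)) * (r : ℝ) ^ n / (n.factorial : ℝ) = poissonPMFReal r n :=
    fun n => rfl
  have hs : HasSum (fun n : ℕ => poissonPMFReal r n * a ^ n)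
      (Real.exp (-(r : ℝ)) * Real.exp ((r : ℝ) * a)) := by
    have h := NormedSpace.expSeries_div_hasSum_exp ((r : ℝ) * a)
    rw [← Real.exp_eq_exp_ℝ] at h
    have h2 := h.mul_left (Real.exp (-(r : ℝ)))
    have heq : (fun n : ℕ => poissonPMFReal r n * a ^ n)
        = fun n : ℕ => Real.exp (-(r : ℝ)) * (((r : ℝ) * a) ^ n / n.factorial) := by
      funext n
      unfold poissonPMFReal
      rw [mul_pow]
      ring
    rw [heq]
    exact h2
  have : ∑' n : ℕ, (Real.exp (-(r : ℝ)) * (r : ℝ) ^ n / (n.factorial : ℝ)) • a ^ n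
      = Real.exp (-(r : ℝ)) * Real.exp ((r : ℝ) * a) := by
    rw [← hs.tsum_eq]
    exact tsum_congr fun n => by rw [h1, smul_eq_mul]
  rw [this, ← Real.exp_add]
  ring_nf

/-- Variance of the Poisson estimator `M̂₁ = ∏_k ((δλ_M - λ_k)/(δλ_M - λ_m))^{|N_k|}`,
where `(|N_1|,…,|N_K|)` are independent with `|N_k| ~ Poisson(μ_k λ*)`,
`λ* = δλ_M - λ_m`. -/
theorem poisson_estimator_variance
    {Ω : Type*} [MeasurableSpace Ω] (P : Measure Ω) [IsProbabilityMeasure P]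
    (K : ℕ) (hK : 0 < K)
    (μ : Fin K → ℝ) (hμ : ∀ k, 0 ≤ μ k)
    (lam : Fin K → ℝ) (hlam : ∀ k, 0 < lam k)
    (lamM lamm : ℝ)
    (hM : IsGreatest (Set.range lam) lamM) (hm : IsLeast (Set.range lam) lamm)
    (δ : ℝ) (hδ : 1 < δ)
    (N : Fin K → Ω → ℕ) (hNmeas : ∀ k, Measurable (N k))
    (hNdist : ∀ k, Measure.map (N k) P
      = poissonMeasure ((μ k * (δ * lamM - lamm)).toNNReal))
    (hNindep : iIndepFun N P) :
    (∫ ω, (∏ k, ((δ * lamM - lam k) / (δ * lamM - lamm)) ^ (N k ω)) ^ 2 ∂P)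
      - (∫ ω, ∏ k, ((δ * lamM - lam k) / (δ * lamM - lamm)) ^ (N k ω) ∂P) ^ 2
      = Real.exp (-∑ k, μ k * (δ * lamM - lamm) *
          (1 - ((δ * lamM - lam k) / (δ * lamM - lamm)) ^ 2))
        - Real.exp (-(2 * ∑ k, μ k * (lam k - lamm))) := by
  -- basic positivity facts
  set A : ℝ := δ * lamM - lamm with hA_def
  obtain ⟨kM, hkM⟩ := hM.1
  have hlamM_pos : 0 < lamM := hkM ▸ hlam kM
  have hle_M : ∀ k, lam k ≤ lamM := fun k => hM.2 ⟨k, rfl⟩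
  have hle_m : ∀ k, lamm ≤ lam k := fun k => hm.2 ⟨k, rfl⟩
  have hmM : lamm ≤ lamM := hkM ▸ hle_m kM
  have hlt : ∀ k, lam k < δ * lamM := fun k =>
    lt_of_le_of_lt (hle_M k) (by nlinarith)
  have hA_pos : 0 < A := by
    have := hlt ⟨0, hK⟩
    have := hle_m ⟨0, hK⟩
    simp only [hA_def]
    linarith
  set a : Fin K → ℝ := fun k => (δ * lamM - lam k) / A with ha_def
  have ha_pos : ∀ k, 0 < a k := fun k => div_pos (by linarith [hlt k]) hA_pos
  have ha_le : ∀ k, a k ≤ 1 := fun k =>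
    div_le_one_of_le₀ (by linarith [hle_m k]) hA_pos.le
  -- key computation for any b with 0 < b k ≤ 1
  have key : ∀ b : Fin K → ℝ, (∀ k, 0 < b k) → (∀ k, b k ≤ 1) →
      ∫ ω, ∏ k, (b k) ^ (N k ω) ∂P = Real.exp (-∑ k, μ k * A * (1 - b k)) := by
    intro b hb0 hb1
    have hcoe : ∀ k, (((μ k * A).toNNReal : ℝ≥0) : ℝ) = μ k * A := fun k =>
      Real.coe_toNNReal _ (mul_nonneg (hμ k) hA_pos.le)
    have hint_k : ∀ k, ∫ ω, (b k) ^ (N k ω) ∂P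
        = Real.exp (-(μ k * A) * (1 - b k)) := by
      intro k
      have hmap := integral_map (μ := P) (φ := N k) (hNmeas k).aemeasurable
        (f := fun n : ℕ => b k ^ n) (Measurable.of_discrete).aestronglyMeasurable
      rw [hNdist k] at hmap
      rw [← hmap, poisson_pow_integral _ (hb0 k).le (hb1 k), hcoe k]
    -- independence via exp/log
    set Y : Fin K → Ω → ℝ := fun k ω => Real.log (b k) * (N k ω : ℝ) with hY_def
    have hYmeas : ∀ k, Measurable (Y k) := fun k =>
      (Measurable.of_discrete (f := fun n : ℕ => Real.log (b k) * (n : ℝ))).comp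
        (hNmeas k)
    have hYindep : iIndepFun Y P :=
      hNindep.comp (fun k (n : ℕ) => Real.log (b k) * (n : ℝ))
        (fun k => Measurable.of_discrete)
    have hpow : ∀ k (n : ℕ), b k ^ n = Real.exp (Real.log (b k) * n) := by
      intro k n
      rw [mul_comm, Real.exp_nat_mul, Real.exp_log (hb0 k)]
    have hprod : ∀ ω, ∏ k, (b k) ^ (N k ω) = Real.exp (1 * (∑ k, Y k) ω) := by
      intro ω
      rw [one_mul, Finset.sum_apply, Real.exp_sum]
      exact Finset.prod_congr rfl fun k _ => hpow k (N k ω)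
    have hmgf := hYindep.mgf_sum hYmeas Finset.univ (t := 1)
    calc ∫ ω, ∏ k, (b k) ^ (N k ω) ∂P
        = mgf (∑ k, Y k) P 1 := by
          rw [mgf]
          exact integral_congr_ae (ae_of_all _ fun ω => hprod ω)
      _ = ∏ k, mgf (Y k) P 1 := hmgf
      _ = ∏ k, Real.exp (-(μ k * A) * (1 - b k)) := by
          refine Finset.prod_congr rfl fun k _ => ?_
          rw [mgf, ← hint_k k]
          refine integral_congr_ae (ae_of_all _ fun ω => ?_)
          simp only [hY_def, one_mul]
          exact (hpow k (N k ω)).symm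
      _ = Real.exp (-∑ k, μ k * A * (1 - b k)) := by
          rw [← Real.exp_sum, ← Finset.sum_neg_distrib]
          exact congrArg Real.exp (Finset.sum_congr rfl fun k _ => by ring)
  -- apply to a and a^2
  have h1 : ∫ ω, ∏ k, (a k) ^ (N k ω) ∂P
      = Real.exp (-∑ k, μ k * A * (1 - a k)) := key a ha_pos ha_le
  have h2 : ∫ ω, (∏ k, (a k) ^ (N k ω)) ^ 2 ∂P
      = Real.exp (-∑ k, μ k * A * (1 - (a k) ^ 2)) := by
    have hb0 : ∀ k, 0 < (a k) ^ 2 := fun k => pow_pos (ha_pos k) 2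
    have hb1 : ∀ k, (a k) ^ 2 ≤ 1 := fun k => pow_le_one₀ (ha_pos k).le (ha_le k)
    have hk := key (fun k => (a k) ^ 2) hb0 hb1
    rw [← hk]
    refine integral_congr_ae (ae_of_all _ fun ω => ?_)
    show (∏ k, (a k) ^ (N k ω)) ^ 2 = ∏ k, ((a k) ^ 2) ^ (N k ω)
    rw [← Finset.prod_pow]
    exact Finset.prod_congr rfl fun k _ => by rw [← pow_mul, ← pow_mul, mul_comm]
  rw [h2, h1, sq, ← Real.exp_add]
  simp only [ha_def]
  have hsum : ∑ k, μ k * A * (1 - (δ * lamM - lam k) / A)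
      = ∑ k, μ k * (lam k - lamm) := by
    refine Finset.sum_congr rfl fun k _ => ?_
    have hne : A ≠ 0 := hA_pos.ne'
    rw [hA_def] at hne ⊢
    field_simp
    ring
  rw [hsum]
  congr 2
  ring
end

section
/- With the notation above, the variance of M̂_1 = ∏_{k=1}^K ((δλ_M − λ_k)/(δλ_M − λ_m))^{|N_k|}, viewed as a function of δ on (1, ∞), is finite and strictly decreasing in δ (assuming not all λ_k are equal). -/
open Real

/-- The variance of the Poisson estimator `M̂₁`, viewed as a function of `δ` on `(1,∞)`,
namely `V(δ) = exp{−∑_k μ_k(δλ_M−λ_m)[1 − ((δλ_M−λ_k)/(δλ_M−λ_m))²]}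
             − exp{−2∑_k μ_k(λ_k−λ_m)}`,
is strictly decreasing in `δ` (assuming not all `λ_k` are equal). -/
theorem poisson_estimator_variance_strictAnti
    (K : ℕ) (hK : 0 < K)
    (μ : Fin K → ℝ) (hμ : ∀ k, 0 < μ k)
    (lam : Fin K → ℝ) (hlam : ∀ k, 0 < lam k)
    (lamM lamm : ℝ)
    (hM : IsGreatest (Set.range lam) lamM) (hm : IsLeast (Set.range lam) lamm)
    (hne : ∃ k₁ k₂, lam k₁ ≠ lam k₂) :
    StrictAntiOn
      (fun δ : ℝ =>
        Real.exp (-∑ k, μ k * (δ * lamM - lamm) *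
            (1 - ((δ * lamM - lam k) / (δ * lamM - lamm)) ^ 2))
          - Real.exp (-(2 * ∑ k, μ k * (lam k - lamm))))
      (Set.Ioi 1) := by
  obtain ⟨⟨kM, hkM⟩, hMub⟩ := hM
  obtain ⟨⟨km, hkm⟩, hmlb⟩ := hm
  have hMub' : ∀ k, lam k ≤ lamM := fun k => hMub ⟨k, rfl⟩
  have hmlb' : ∀ k, lamm ≤ lam k := fun k => hmlb ⟨k, rfl⟩
  have hMpos : 0 < lamM := hkM ▸ hlam kM
  -- there is an index with lam k > lamm
  obtain ⟨k₀, hk₀⟩ : ∃ k, lamm < lam k := by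
    obtain ⟨k₁, k₂, hne⟩ := hne
    rcases lt_or_eq_of_le (hmlb' k₁) with h | h
    · exact ⟨k₁, h⟩
    · exact ⟨k₂, lt_of_le_of_ne (hmlb' k₂) (fun h2 => hne (h2 ▸ h.symm))⟩
  have hden : ∀ δ : ℝ, 1 < δ → 0 < δ * lamM - lamm := by
    intro δ hδ
    have h1 : lamM < δ * lamM := by nlinarith
    have := hmlb' kM
    rw [hkM] at this
    linarith
  -- rewrite each term
  have hterm : ∀ δ : ℝ, 1 < δ → ∀ k : Fin K,
      μ k * (δ * lamM - lamm) * (1 - ((δ * lamM - lam k) / (δ * lamM - lamm)) ^ 2)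
      = μ k * (2 * (lam k - lamm) - (lam k - lamm) ^ 2 / (δ * lamM - lamm)) := by
    intro δ hδ k
    have hd := hden δ hδ
    field_simp
    ring
  intro x hx y hy hxy
  simp only [Set.mem_Ioi] at hx hy
  have hsum : (∑ k, μ k * (x * lamM - lamm) *
      (1 - ((x * lamM - lam k) / (x * lamM - lamm)) ^ 2)) <
      ∑ k, μ k * (y * lamM - lamm) *
      (1 - ((y * lamM - lam k) / (y * lamM - lamm)) ^ 2) := by
    rw [Finset.sum_congr rfl (fun k _ => hterm x hx k),
        Finset.sum_congr rfl (fun k _ => hterm y hy k)]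
    have hdx := hden x hx
    have hdy := hden y hy
    have hdlt : x * lamM - lamm < y * lamM - lamm := by nlinarith
    apply Finset.sum_lt_sum
    · intro k _
      have hA : (0:ℝ) ≤ (lam k - lamm) ^ 2 := sq_nonneg _
      have : (lam k - lamm) ^ 2 / (y * lamM - lamm) ≤
          (lam k - lamm) ^ 2 / (x * lamM - lamm) := by gcongr
      have := hμ k
      nlinarith
    · refine ⟨k₀, Finset.mem_univ _, ?_⟩
      have hA : (0:ℝ) < (lam k₀ - lamm) ^ 2 := by nlinarith
      have : (lam k₀ - lamm) ^ 2 / (y * lamM - lamm) <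
          (lam k₀ - lamm) ^ 2 / (x * lamM - lamm) := by gcongr
      have := hμ k₀
      nlinarith
  simp only
  have := Real.exp_lt_exp.mpr (neg_lt_neg hsum)
  linarith
end

section
/- In a pseudo-marginal Metropolis–Hastings algorithm targeting π(θ) using a nonnegative unbiased estimator π̂(θ; U) with U ~ m_θ(·) and E_U[π̂(θ;U)] = π(θ), the augmented chain on (θ, U) with acceptance probability min{1, (π̂(θ̈;Ü)q(θ|θ̈))/(π̂(θ;U)q(θ̈|θ))} (with Ü ~ m_{θ̈} drawn independently) has invariant density proportional to π̂(θ;u)m_θ(u), whose θ-marginal is π(θ). -/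
open MeasureTheory

lemma pm_min_aux (a b : ℝ) (ha : 0 ≤ a) (hb : 0 ≤ b) : a * min 1 (b / a) = min a b := by
  rcases eq_or_lt_of_le ha with h | h
  · simp [← h, min_def, hb]
  · rw [mul_min_of_nonneg _ _ h.le, mul_one, mul_div_cancel₀ _ h.ne']

/-- Pseudo-marginal Metropolis–Hastings (Andrieu & Roberts 2009): if `π̂(θ;u) ≥ 0` is
an unbiased estimator of the target `π(θ)` with auxiliary variable `u ~ m_θ`, then the
augmented chain on `(θ,u)` that proposes `θ̈ ~ q(·|θ)`, `ü ~ m_θ̈` and accepts with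
probability `min{1, (π̂(θ̈;ü)q(θ|θ̈))/(π̂(θ;u)q(θ̈|θ))}` satisfies detailed balance
w.r.t. the density proportional to `π̂(θ;u)m_θ(u)`, whose `θ`-marginal is `π(θ)`. -/
theorem pseudo_marginal_invariant
    {α γ : Type*} [MeasurableSpace α] [MeasurableSpace γ]
    (μγ : Measure γ) [SigmaFinite μγ]
    (π : α → ℝ) (q : α → α → ℝ) (m : α → γ → ℝ) (hatπ : α → γ → ℝ)
    (hq : ∀ θ θ', 0 < q θ θ') (hm : ∀ θ u, 0 < m θ u)
    (hhat : ∀ θ u, 0 ≤ hatπ θ u)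
    (hunbiased : ∀ θ, ∫ u, hatπ θ u * m θ u ∂μγ = π θ) :
    -- detailed balance of the augmented kernel w.r.t. the density `π̂(θ;u)m_θ(u)`
    (∀ θ θ' : α, ∀ u u' : γ,
      (hatπ θ u * m θ u) * (q θ θ' * m θ' u' *
          min 1 ((hatπ θ' u' * q θ' θ) / (hatπ θ u * q θ θ')))
        = (hatπ θ' u' * m θ' u') * (q θ' θ * m θ u *
            min 1 ((hatπ θ u * q θ θ') / (hatπ θ' u' * q θ' θ)))) ∧
    -- the `θ`-marginal of the invariant density is `π`
    (∀ θ, ∫ u, hatπ θ u * m θ u ∂μγ = π θ) := by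
  refine ⟨fun θ θ' u u' => ?_, hunbiased⟩
  have ha : (0:ℝ) ≤ hatπ θ u * q θ θ' := mul_nonneg (hhat _ _) (hq _ _).le
  have hb : (0:ℝ) ≤ hatπ θ' u' * q θ' θ := mul_nonneg (hhat _ _) (hq _ _).le
  have h1 : (hatπ θ u * m θ u) * (q θ θ' * m θ' u' *
      min 1 ((hatπ θ' u' * q θ' θ) / (hatπ θ u * q θ θ')))
      = (m θ u * m θ' u') * ((hatπ θ u * q θ θ') *
        min 1 ((hatπ θ' u' * q θ' θ) / (hatπ θ u * q θ θ'))) := by ring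
  have h2 : (hatπ θ' u' * m θ' u') * (q θ' θ * m θ u *
      min 1 ((hatπ θ u * q θ θ') / (hatπ θ' u' * q θ' θ)))
      = (m θ u * m θ' u') * ((hatπ θ' u' * q θ' θ) *
        min 1 ((hatπ θ u * q θ θ') / (hatπ θ' u' * q θ' θ))) := by ring
  rw [h1, h2, pm_min_aux _ _ ha hb, pm_min_aux _ _ hb ha, min_comm]
end
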